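/- Let p be an odd prime. The holomorph Hol(C_p × C_{2p}) of the abelian group C_p × C_{2p} has exactly p² semiregular subgroups isomorphic to C_p × C_p. -/

import Mathlib

open Equiv

/-- The left regular representation of a group `N` in `Equiv.Perm N`. -/
def leftReg (N : Type*) [Group N] : N →* Equiv.Perm N :=
  MulAction.toPermHom N N

/-- The holomorph of `N`: the normalizer of the image of the left regular
representation inside the symmetric group on `N`. -/
def Hol (N : Type*) [Group N] : Subgroup (Equiv.Perm N) :=
  Subgroup.normalizer (MonoidHom.range (leftReg N))

/-- A subgroup of `Equiv.Perm N` is semiregular if every non-identity element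
has no fixed point on `N`. -/
def IsSemiregular {N : Type*} [Group N] (H : Subgroup (Equiv.Perm N)) : Prop :=
  ∀ g ∈ H, g ≠ 1 → ∀ x : N, g x ≠ x

/-- A subgroup of `Equiv.Perm N` is regular if its natural action on `N` is
simply transitive. -/
def IsRegularSubgroup {N : Type*} [Group N] (G : Subgroup (Equiv.Perm N)) : Prop :=
  ∀ x y : N, ∃! g : G, (g : Equiv.Perm N) x = y

/-- The cyclic group of order `n` (written multiplicatively). -/
abbrev Cyc (n : ℕ) := Multiplicative (ZMod n)

/-- The group `C_p × C_p` (written multiplicatively). -/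
abbrev Vp (p : ℕ) := Multiplicative (ZMod p × ZMod p)

/-- The action of `C_2` on `C_p × C_p` in which the generator acts by inversion. -/
def actC2 (p : ℕ) : Multiplicative (ZMod 2) →* MulAut (Vp p) where
  toFun c := if Multiplicative.toAdd c = 0 then 1 else MulEquiv.inv (Vp p)
  map_one' := by simp
  map_mul' a b := by
    have h : ∀ x : ZMod 2, x = 0 ∨ x = 1 := by decide
    have hmul : Multiplicative.toAdd (a * b) = Multiplicative.toAdd a + Multiplicative.toAdd b := rfl
    have h11 : (1 : ZMod 2) + 1 = 0 := by decide
    have hinv : (1 : MulAut (Vp p)) = MulEquiv.inv (Vp p) * MulEquiv.inv (Vp p) := by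
      refine MulEquiv.ext fun x => ?_
      show x = (x⁻¹)⁻¹
      simp
    rcases h (Multiplicative.toAdd a) with ha | ha <;> rcases h (Multiplicative.toAdd b) with hb | hb <;>
      simp [hmul, ha, hb, h11, hinv]

/-- The semidirect product `(C_p × C_p) ⋊ C_2`, where the generator of `C_2`
acts by inversion. -/
abbrev GD (p : ℕ) := SemidirectProduct (Vp p) (Multiplicative (ZMod 2)) (actC2 p)

open Multiplicative

section Generic

variable {G : Type*} [CommGroup G]

lemma leftReg_apply (n x : G) : leftReg G n x = n * x := rfl

/-- Affine maps (translation composed with a bijective endomorphism) lie in the holomorph. -/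
lemma mem_hol_of_affine (v : G) (φ : G →* G) (hφ : Function.Bijective φ)
    (g : Perm G) (hg : ∀ x, g x = v * φ x) : g ∈ Hol G := by
  rw [Hol, Subgroup.mem_normalizer_iff]
  have key : ∀ n : G, g * leftReg G n * g⁻¹ = leftReg G (φ n) := by
    intro n
    ext x
    simp only [Equiv.Perm.mul_apply, leftReg_apply]
    have h1 : g (n * g⁻¹ x) = v * (φ n * φ (g⁻¹ x)) := by rw [hg, map_mul]
    have h2 : x = v * φ (g⁻¹ x) := by rw [← hg]; exact (g.apply_symm_apply x).symm
    rw [h1, mul_left_comm v (φ n) (φ (g⁻¹ x)), ← h2]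
  intro h
  constructor
  · rintro ⟨n, rfl⟩
    exact ⟨φ n, (key n).symm⟩
  · rintro ⟨m, hm⟩
    obtain ⟨n, hn⟩ := hφ.2 m
    have : g * h * g⁻¹ = g * leftReg G n * g⁻¹ := by rw [key, hn, hm]
    have h2 : h = leftReg G n := by
      have := mul_left_cancel (mul_right_cancel this)
      exact this
    exact ⟨n, h2.symm⟩

/-- Elements of the holomorph are "affine": `g (n*x) = g n * (g 1)⁻¹ * g x`. -/
lemma hol_apply_mul {g : Perm G} (hg : g ∈ Hol G) (n x : G) :
    g (n * x) = g n * (g 1)⁻¹ * g x := by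
  rw [Hol, Subgroup.mem_normalizer_iff] at hg
  obtain ⟨m, hm⟩ := (hg (leftReg G n)).1 ⟨n, rfl⟩
  have h1 : ∀ y, m * g y = g (n * y) := by
    intro y
    have := congrArg (fun π : Perm G => π (g y)) hm.symm
    simpa [leftReg_apply, Equiv.Perm.mul_apply] using this.symm
  have h2 := h1 1
  rw [mul_one] at h2
  have hmval : m = g n * (g 1)⁻¹ := by
    rw [← h2]; group
  rw [← h1 x, hmval]

/-- The automorphism part of an element of the holomorph is multiplicative. -/
lemma hol_aut_mul {g : Perm G} (hg : g ∈ Hol G) (x y : G) :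
    (g 1)⁻¹ * g (x * y) = ((g 1)⁻¹ * g x) * ((g 1)⁻¹ * g y) := by
  rw [hol_apply_mul hg x y]
  group

end Generic

section Transport

variable {N N' : Type*} [Group N] [Group N']

/-- `Equiv.permCongr` as a `MulEquiv`. -/
def permCongrMul (e : N ≃ N') : Perm N ≃* Perm N' :=
  { Equiv.permCongr e with
    map_mul' := by
      intro f g
      ext x
      simp [Equiv.permCongr_apply, Equiv.Perm.mul_apply] }

lemma permCongrMul_apply (e : N ≃ N') (g : Perm N) (x : N') :
    permCongrMul e g x = e (g (e.symm x)) := rfl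

variable (e : N ≃* N')

lemma permCongrMul_leftReg (n : N) :
    permCongrMul e.toEquiv (leftReg N n) = leftReg N' (e n) := by
  ext x
  show e (n * e.symm x) = e n * x
  rw [map_mul, MulEquiv.apply_symm_apply]

lemma permCongrMul_symm_eq :
    (permCongrMul e.toEquiv).symm = permCongrMul e.symm.toEquiv := by
  ext g x
  rfl

lemma permCongrMul_mem_range {h : Perm N} :
    permCongrMul e.toEquiv h ∈ (leftReg N').range ↔ h ∈ (leftReg N).range := by
  constructor
  · rintro ⟨n', hn'⟩
    refine ⟨e.symm n', ?_⟩
    apply (permCongrMul e.toEquiv).injective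
    rw [permCongrMul_leftReg, MulEquiv.apply_symm_apply, hn']
  · rintro ⟨n, hn⟩
    exact ⟨e n, by rw [← hn, permCongrMul_leftReg]⟩

lemma permCongrMul_mem_hol {g : Perm N} (hg : g ∈ Hol N) :
    permCongrMul e.toEquiv g ∈ Hol N' := by
  rw [Hol, Subgroup.mem_normalizer_iff] at hg ⊢
  intro h'
  set σ := permCongrMul e.toEquiv
  have hh' : σ (σ.symm h') = h' := σ.apply_symm_apply h'
  constructor
  · intro hmem
    have : σ.symm h' ∈ (leftReg N).range := by
      rw [← permCongrMul_mem_range e, hh']; exact hmem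
    have h2 := (hg (σ.symm h')).1 this
    have h3 : σ (g * σ.symm h' * g⁻¹) ∈ (leftReg N').range :=
      (permCongrMul_mem_range e).2 h2
    rwa [map_mul, map_mul, map_inv, hh'] at h3
  · intro hmem
    have h3 : σ (g * σ.symm h' * g⁻¹) ∈ (leftReg N').range := by
      rwa [map_mul, map_mul, map_inv, hh']
    have h2 : g * σ.symm h' * g⁻¹ ∈ (leftReg N).range := by
      rwa [permCongrMul_mem_range e] at h3
    have : σ.symm h' ∈ (leftReg N).range := (hg (σ.symm h')).2 h2
    rw [← hh']
    exact (permCongrMul_mem_range e).2 this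

variable (K : Type*) [Group K]

/-- The conditions are preserved under transport along a group isomorphism. -/
lemma transport_cond (H : Subgroup (Perm N))
    (h1 : H ≤ Hol N) (h2 : IsSemiregular H) (h3 : Nonempty (H ≃* K)) :
    Subgroup.map (permCongrMul e.toEquiv).toMonoidHom H ≤ Hol N' ∧
    IsSemiregular (Subgroup.map (permCongrMul e.toEquiv).toMonoidHom H) ∧
    Nonempty ((Subgroup.map (permCongrMul e.toEquiv).toMonoidHom H) ≃* K) := by
  set σ := permCongrMul e.toEquiv
  refine ⟨?_, ?_, ?_⟩
  · rintro g' ⟨g, hg, rfl⟩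
    exact permCongrMul_mem_hol e (h1 hg)
  · rintro g' ⟨g, hg, rfl⟩ hne x hx
    have hgne : g ≠ 1 := by
      rintro rfl
      exact hne (map_one σ.toMonoidHom)
    have : g (e.symm x) = e.symm x := by
      have := hx
      rw [show σ.toMonoidHom g x = e (g (e.symm x)) from rfl] at this
      have := congrArg e.symm this
      simpa using this
    exact h2 g hg hgne (e.symm x) this
  · obtain ⟨ψ⟩ := h3
    exact ⟨((Subgroup.equivMapOfInjective H σ.toMonoidHom σ.injective).symm.trans ψ)⟩

lemma permCongrMul_map_map (e : N ≃* N') (H : Subgroup (Perm N)) :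
    Subgroup.map (permCongrMul e.symm.toEquiv).toMonoidHom
      (Subgroup.map (permCongrMul e.toEquiv).toMonoidHom H) = H := by
  rw [Subgroup.map_map]
  have hcomp : (permCongrMul e.symm.toEquiv).toMonoidHom.comp (permCongrMul e.toEquiv).toMonoidHom
      = MonoidHom.id _ := by
    ext g x
    simp [permCongrMul_apply]
  rw [hcomp, Subgroup.map_id]

/-- Transport of the counting problem along a group isomorphism. -/
lemma transport_card (e : N ≃* N') :
    Nat.card {H : Subgroup (Perm N) // H ≤ Hol N ∧ IsSemiregular H ∧ Nonempty (H ≃* K)} =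
    Nat.card {H : Subgroup (Perm N') // H ≤ Hol N' ∧ IsSemiregular H ∧ Nonempty (H ≃* K)} := by
  apply Nat.card_congr
  refine ⟨fun X => ⟨Subgroup.map (permCongrMul e.toEquiv).toMonoidHom X.1,
      transport_cond e K X.1 X.2.1 X.2.2.1 X.2.2.2⟩,
    fun X => ⟨Subgroup.map (permCongrMul e.symm.toEquiv).toMonoidHom X.1,
      transport_cond e.symm K X.1 X.2.1 X.2.2.1 X.2.2.2⟩, ?_, ?_⟩
  · intro X
    ext1
    exact permCongrMul_map_map e X.1
  · intro X
    ext1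
    have := permCongrMul_map_map e.symm X.1
    rwa [MulEquiv.symm_symm] at this

end Transport

section BSet

variable (p : ℕ)

abbrev Vv (p : ℕ) := ZMod p × ZMod p
abbrev Mm (p : ℕ) := Vv p × ZMod 2

/-- The conditions on a "multiplication" `β`: biadditive (via symmetry), symmetric,
and triple products vanish. -/
def BOK (β : Vv p → Vv p → Vv p) : Prop :=
  (∀ u x y, β u (x + y) = β u x + β u y) ∧ (∀ u x, β u x = β x u) ∧
    (∀ u w x, β u (β w x) = 0)

abbrev BB := {β : Vv p → Vv p → Vv p // BOK p β}

variable {p}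

section BOKLemmas

variable {β : Vv p → Vv p → Vv p} (hβ : BOK p β)
include hβ

lemma bzero2 (u : Vv p) : β u 0 = 0 := by
  have h := hβ.1 u 0 0
  rw [add_zero] at h
  exact left_eq_add.mp h

lemma bzero1 (u : Vv p) : β 0 u = 0 := by rw [hβ.2.1]; exact bzero2 hβ u

lemma bneg2 (u x : Vv p) : β u (-x) = -β u x := by
  have h : β u (-x) + β u x = 0 := by rw [← hβ.1, neg_add_cancel, bzero2 hβ]
  exact eq_neg_of_add_eq_zero_left h

lemma bsub2 (u x y : Vv p) : β u (x - y) = β u x - β u y := by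
  rw [sub_eq_add_neg, hβ.1, bneg2 hβ, sub_eq_add_neg]

lemma badd1 (u v x : Vv p) : β (u + v) x = β u x + β v x := by
  rw [hβ.2.1, hβ.1, hβ.2.1 x u, hβ.2.1 x v]

lemma bneg1 (u x : Vv p) : β (-u) x = -β u x := by
  rw [hβ.2.1, bneg2 hβ, hβ.2.1]

lemma bnsmul2 (u : Vv p) (n : ℕ) (x : Vv p) : β u (n • x) = n • β u x := by
  induction n with
  | zero => simp [bzero2 hβ]
  | succ n ih => rw [succ_nsmul, hβ.1, ih, succ_nsmul]

end BOKLemmas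

lemma zsmul_val [NeZero p] (c : ZMod p) (x : Vv p) : c • x = c.val • x := by
  conv_lhs => rw [← ZMod.natCast_rightInverse c]
  rw [Nat.cast_smul_eq_nsmul]

section BOKLemmas2

variable [NeZero p] {β : Vv p → Vv p → Vv p} (hβ : BOK p β)
include hβ

lemma bzsmul2 (u : Vv p) (c : ZMod p) (x : Vv p) : β u (c • x) = c • β u x := by
  rw [zsmul_val, zsmul_val, bnsmul2 hβ]

lemma bzsmul1 (u : Vv p) (c : ZMod p) (x : Vv p) : β (c • u) x = c • β u x := by
  rw [hβ.2.1, bzsmul2 hβ, hβ.2.1]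

end BOKLemmas2

lemma decompV (u : Vv p) :
    u = u.1 • ((1 : ZMod p), (0 : ZMod p)) + u.2 • ((0 : ZMod p), (1 : ZMod p)) := by
  ext <;> simp

lemma bexpand [NeZero p] {β : Vv p → Vv p → Vv p} (hβ : BOK p β) (u x : Vv p) :
    β u x = (u.1 * x.1) • β (1, 0) (1, 0) + (u.1 * x.2 + u.2 * x.1) • β (1, 0) (0, 1)
      + (u.2 * x.2) • β (0, 1) (0, 1) := by
  have h2 : ∀ w : Vv p, β w x = x.1 • β w (1, 0) + x.2 • β w (0, 1) := by
    intro w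
    conv_lhs => rw [decompV x]
    rw [hβ.1, bzsmul2 hβ, bzsmul2 hβ]
  have h1 : β u x = u.1 • β (1, 0) x + u.2 • β (0, 1) x := by
    conv_lhs => rw [decompV u]
    rw [badd1 hβ, bzsmul1 hβ, bzsmul1 hβ]
  rw [h1, h2, h2, hβ.2.1 (0, 1) (1, 0)]
  rw [smul_add, smul_add, smul_smul, smul_smul, smul_smul, smul_smul, add_smul]
  abel

/-- Construction of a symmetric biadditive map from its three coefficients. -/
def mkB (A B C : Vv p) : Vv p → Vv p → Vv p :=
  fun u x => (u.1 * x.1) • A + (u.1 * x.2 + u.2 * x.1) • B + (u.2 * x.2) • C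

lemma mkB_add2 (A B C : Vv p) : ∀ u x y, mkB A B C u (x + y) = mkB A B C u x + mkB A B C u y := by
  intro u x y
  simp only [mkB, Prod.fst_add, Prod.snd_add, mul_add, add_smul]
  abel

lemma mkB_symm (A B C : Vv p) : ∀ u x, mkB A B C u x = mkB A B C x u := by
  intro u x
  simp only [mkB]
  module

lemma mkB_smul2 (A B C : Vv p) (u : Vv p) (c : ZMod p) (x : Vv p) :
    mkB A B C u (c • x) = c • mkB A B C u x := by
  simp only [mkB, Prod.smul_fst, Prod.smul_snd, smul_eq_mul]
  module

lemma mkB_apply (A B C u x : Vv p) :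
    mkB A B C u x = (u.1 * x.1) • A + (u.1 * x.2 + u.2 * x.1) • B + (u.2 * x.2) • C := rfl

lemma mkB_triple (A B C : Vv p)
    (h1 : ∀ u, mkB A B C u A = 0) (h2 : ∀ u, mkB A B C u B = 0)
    (h3 : ∀ u, mkB A B C u C = 0) :
    ∀ u w x, mkB A B C u (mkB A B C w x) = 0 := by
  intro u w x
  rw [mkB_apply A B C w x, mkB_add2, mkB_add2, mkB_smul2, mkB_smul2, mkB_smul2, h1, h2, h3]
  simp

end BSet

section Count

variable {p : ℕ}

/-- The parameters-to-`BB` map. -/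
def PhiB (v : Vv p) : BB p :=
  if hv : v.2 = 0 then
    ⟨mkB 0 0 (v.1, 0),
      mkB_add2 _ _ _, mkB_symm _ _ _,
      mkB_triple _ _ _ (by intro u; simp [mkB_apply])
        (by intro u; simp [mkB_apply]) (by intro u; simp [mkB_apply])⟩
  else
    ⟨mkB (-(v.1 * v.2), v.2) (v.1 • (-(v.1 * v.2), v.2)) ((v.1 * v.1) • (-(v.1 * v.2), v.2)),
      mkB_add2 _ _ _, mkB_symm _ _ _,
      mkB_triple _ _ _
        (by
          intro u
          rw [mkB_apply]
          rw [smul_smul, smul_smul, ← add_smul, ← add_smul]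
          convert zero_smul (ZMod p) (-(v.1 * v.2), v.2) using 2
          simp only []
          ring)
        (by
          intro u
          rw [mkB_smul2]
          rw [show mkB (-(v.1 * v.2), v.2) (v.1 • (-(v.1 * v.2), v.2))
            ((v.1 * v.1) • (-(v.1 * v.2), v.2)) u (-(v.1 * v.2), v.2) = 0 from ?_, smul_zero]
          rw [mkB_apply]
          rw [smul_smul, smul_smul, ← add_smul, ← add_smul]
          convert zero_smul (ZMod p) (-(v.1 * v.2), v.2) using 2
          simp only []
          ring)
        (by
          intro u
          rw [mkB_smul2]
          rw [show mkB (-(v.1 * v.2), v.2) (v.1 • (-(v.1 * v.2), v.2))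
            ((v.1 * v.1) • (-(v.1 * v.2), v.2)) u (-(v.1 * v.2), v.2) = 0 from ?_, smul_zero]
          rw [mkB_apply]
          rw [smul_smul, smul_smul, ← add_smul, ← add_smul]
          convert zero_smul (ZMod p) (-(v.1 * v.2), v.2) using 2
          simp only []
          ring)⟩

/-- The `BB`-to-parameters map. -/
def XiB (b : BB p) : Vv p :=
  if (b.1 (1, 0) (1, 0)).2 = 0 then ((b.1 (0, 1) (0, 1)).1, 0)
  else (-((b.1 (1, 0) (1, 0)).1 * ((b.1 (1, 0) (1, 0)).2)⁻¹), (b.1 (1, 0) (1, 0)).2)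

lemma XiB_PhiB [Fact p.Prime] (v : Vv p) : XiB (PhiB v) = v := by
  by_cases hv : v.2 = 0
  · rw [PhiB]
    rw [dif_pos hv]
    rw [XiB]
    simp only [mkB_apply]
    norm_num
    exact Prod.ext rfl hv.symm
  · rw [PhiB, dif_neg hv, XiB]
    simp only [mkB_apply]
    have hA : ((1:ZMod p) * 1) • ((-(v.1 * v.2), v.2) : Vv p)
        + ((1 : ZMod p) * 0 + 0 * 1) • (v.1 • (-(v.1 * v.2), v.2))
        + ((0:ZMod p) * 0) • ((v.1 * v.1) • (-(v.1 * v.2), v.2)) = (-(v.1 * v.2), v.2) := by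
      simp
    simp only [hA]
    rw [if_neg hv]
    apply Prod.ext
    · show -(-(v.1 * v.2) * v.2⁻¹) = v.1
      field_simp
    · rfl

lemma PhiB_XiB [Fact p.Prime] (b : BB p) : PhiB (XiB b) = b := by
  obtain ⟨β, hβ⟩ := b
  set A := β (1, 0) (1, 0) with hA
  set Bv := β (1, 0) (0, 1) with hBv
  set C := β (0, 1) (0, 1) with hC
  have hexp : β = mkB A Bv C := by
    funext u x
    rw [bexpand hβ u x, mkB_apply]
  -- the six relations
  have hone : ((1:ZMod p),(0:ZMod p)).1 = 1 := rfl
  have rel : ∀ u y z : Vv p, β u (β y z) = 0 := hβ.2.2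
  have rA1 : A.1 • A + A.2 • Bv = 0 := by
    have h := rel (1, 0) (1, 0) (1, 0)
    rw [bexpand hβ] at h
    simpa using h
  have rA2 : A.1 • Bv + A.2 • C = 0 := by
    have h := rel (0, 1) (1, 0) (1, 0)
    rw [bexpand hβ] at h
    simpa using h
  have rB1 : Bv.1 • A + Bv.2 • Bv = 0 := by
    have h := rel (1, 0) (1, 0) (0, 1)
    rw [bexpand hβ] at h
    simpa using h
  have rB2 : Bv.1 • Bv + Bv.2 • C = 0 := by
    have h := rel (0, 1) (1, 0) (0, 1)
    rw [bexpand hβ] at h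
    simpa using h
  have rC2 : C.1 • Bv + C.2 • C = 0 := by
    have h := rel (0, 1) (0, 1) (0, 1)
    rw [bexpand hβ] at h
    simpa using h
  by_cases hA2 : A.2 = 0
  · -- degenerate case : A = 0, Bv = 0, C.2 = 0
    have hA0 : A = 0 := by
      by_cases hA1 : A.1 = 0
      · exact Prod.ext hA1 hA2
      · have := rA1
        rw [hA2, zero_smul, add_zero] at this
        rcases smul_eq_zero.mp this with h | h
        · exact absurd h hA1
        · exact h
    have hBv2 : Bv.2 = 0 := by
      have := rB1
      rw [hA0, smul_zero, zero_add] at this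
      have h2 := congrArg Prod.snd this
      simp only [Prod.smul_snd, smul_eq_mul] at h2
      exact mul_self_eq_zero.mp h2
    have hBv0 : Bv = 0 := by
      have := rB2
      rw [hBv2, zero_smul, add_zero] at this
      have h1 := congrArg Prod.fst this
      simp only [Prod.smul_fst, smul_eq_mul] at h1
      refine Prod.ext (mul_self_eq_zero.mp h1) hBv2
    have hC2 : C.2 = 0 := by
      have := rC2
      rw [hBv0, smul_zero, zero_add] at this
      have h2 := congrArg Prod.snd this
      simp only [Prod.smul_snd, smul_eq_mul] at h2
      exact mul_self_eq_zero.mp h2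
    have hXi : XiB ⟨β, hβ⟩ = (C.1, 0) := by
      rw [XiB, if_pos (by exact hA2)]
    rw [hXi]
    apply Subtype.ext
    rw [PhiB, dif_pos rfl]
    show mkB 0 0 (C.1, 0) = β
    rw [hexp, hA0, hBv0]
    have : C = (C.1, 0) := Prod.ext rfl hC2
    rw [← this]
  · -- nondegenerate case
    have hXi : XiB ⟨β, hβ⟩ = (-(A.1 * A.2⁻¹), A.2) := by
      rw [XiB, if_neg (by exact hA2)]
    rw [hXi]
    apply Subtype.ext
    rw [PhiB, dif_neg (by exact hA2)]
    show mkB _ _ _ = β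
    set x : ZMod p := -(A.1 * A.2⁻¹) with hx
    have hA' : (-(x * A.2), A.2) = A := by
      apply Prod.ext
      · show -(x * A.2) = A.1
        rw [hx]
        field_simp
      · rfl
    have hBv' : Bv = x • A := by
      have h2 : A.2 • Bv = -(A.1 • A) := eq_neg_of_add_eq_zero_right rA1
      have h3 := congrArg (fun z => A.2⁻¹ • z) h2
      simp only [smul_smul, smul_neg] at h3
      rw [inv_mul_cancel₀ hA2, one_smul] at h3
      rw [h3, ← neg_smul]
      congr 1
      rw [hx]; ring
    have hC' : C = (x * x) • A := by
      have h2 : A.2 • C = -(A.1 • Bv) := eq_neg_of_add_eq_zero_right rA2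
      have h3 := congrArg (fun z => A.2⁻¹ • z) h2
      simp only [smul_smul, smul_neg] at h3
      rw [inv_mul_cancel₀ hA2, one_smul] at h3
      rw [h3, hBv', smul_smul, ← neg_smul]
      congr 1
      rw [hx]; ring
    rw [hexp, hA', ← hBv', ← hC']

lemma card_BB (p : ℕ) [Fact p.Prime] : Nat.card (BB p) = p ^ 2 := by
  have e : BB p ≃ Vv p := ⟨XiB, PhiB, PhiB_XiB, XiB_PhiB⟩
  rw [Nat.card_congr e]
  rw [Nat.card_prod, Nat.card_zmod, sq]

end Count

section Construction

open Multiplicative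

variable {p : ℕ} [NeZero p] [Fact p.Prime]

section WithBeta

variable {β : Vv p → Vv p → Vv p}

lemma beta_prod_zero (hβ : BOK p β) (a b x : Vv p) : β (β a b) x = 0 := by
  rw [hβ.2.1]; exact hβ.2.2 x a b

lemma bsub1 (hβ : BOK p β) (u v x : Vv p) : β (u - v) x = β u x - β v x := by
  rw [hβ.2.1, bsub2 hβ, hβ.2.1 x u, hβ.2.1 x v]

/-- The permutation `m ↦ u + m + β u m` of `C_p² × C_2` (additively). -/
def fperm (hβ : BOK p β) (u : Vv p) : Equiv.Perm (Multiplicative (Mm p)) where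
  toFun m := ofAdd (u + (toAdd m).1 + β u (toAdd m).1, (toAdd m).2)
  invFun m := ofAdd ((toAdd m).1 - u - β u (toAdd m).1 + β u u, (toAdd m).2)
  left_inv := by
    intro m
    apply Multiplicative.toAdd.injective
    apply Prod.ext
    · have hb : β u (u + (toAdd m).1 + β u (toAdd m).1) = β u u + β u (toAdd m).1 := by
        rw [hβ.1, hβ.1, hβ.2.2, add_zero]
      show u + (toAdd m).1 + β u (toAdd m).1 - u - β u (u + (toAdd m).1 + β u (toAdd m).1)
          + β u u = (toAdd m).1
      rw [hb]
      abel
    · rfl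
  right_inv := by
    intro m
    apply Multiplicative.toAdd.injective
    apply Prod.ext
    · have hb : β u ((toAdd m).1 - u - β u (toAdd m).1 + β u u)
          = β u (toAdd m).1 - β u u := by
        rw [hβ.1, hβ.2.2, add_zero, bsub2 hβ, bsub2 hβ, hβ.2.2, sub_zero]
      show u + ((toAdd m).1 - u - β u (toAdd m).1 + β u u)
          + β u ((toAdd m).1 - u - β u (toAdd m).1 + β u u) = (toAdd m).1
      rw [hb]
      abel
    · rfl

lemma fperm_apply (hβ : BOK p β) (u : Vv p) (m : Multiplicative (Mm p)) :
    fperm hβ u m = ofAdd (u + (toAdd m).1 + β u (toAdd m).1, (toAdd m).2) := rfl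

lemma fperm_one (hβ : BOK p β) (u : Vv p) : fperm hβ u 1 = ofAdd (u, 0) := by
  apply Multiplicative.toAdd.injective
  apply Prod.ext
  · show u + (0 : Mm p).1 + β u (0 : Mm p).1 = u
    show u + 0 + β u 0 = u
    rw [bzero2 hβ, add_zero, add_zero]
  · rfl

lemma fperm_zero (hβ : BOK p β) : fperm hβ 0 = 1 := by
  refine Equiv.ext fun m => ?_
  apply Multiplicative.toAdd.injective
  apply Prod.ext
  · show (0 : Vv p) + (toAdd m).1 + β 0 (toAdd m).1 = (toAdd m).1
    rw [bzero1 hβ, zero_add, add_zero]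
  · rfl

lemma fperm_mul (hβ : BOK p β) (u w : Vv p) :
    fperm hβ u * fperm hβ w = fperm hβ (u + w + β u w) := by
  refine Equiv.ext fun m => ?_
  set a := (toAdd m).1 with ha
  have h1 : β u (w + a + β w a) = β u w + β u a := by
    rw [hβ.1, hβ.1, hβ.2.2, add_zero]
  have h2 : β (u + w + β u w) a = β u a + β w a := by
    rw [badd1 hβ, badd1 hβ, beta_prod_zero hβ, add_zero]
  apply Multiplicative.toAdd.injective
  apply Prod.ext
  · show u + (w + a + β w a) + β u (w + a + β w a) = (u + w + β u w) + a
      + β (u + w + β u w) a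
    rw [h1, h2]
    abel
  · rfl

/-- Truncated exponential: `u + 2⁻¹ β u u`. -/
def thB (β : Vv p → Vv p → Vv p) (u : Vv p) : Vv p := u + (2⁻¹ : ZMod p) • β u u

lemma beta_th (hβ : BOK p β) (a b : Vv p) : β (thB β a) (thB β b) = β a b := by
  show β (a + (2⁻¹ : ZMod p) • β a a) (b + (2⁻¹ : ZMod p) • β b b) = β a b
  rw [badd1 hβ, bzsmul1 hβ, beta_prod_zero hβ, smul_zero, add_zero,
    hβ.1, bzsmul2 hβ, hβ.2.2, smul_zero, add_zero]

lemma two_smul_inv (h2 : (2 : ZMod p) ≠ 0) (x : Vv p) :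
    (2⁻¹ : ZMod p) • x + (2⁻¹ : ZMod p) • x = x := by
  rw [← add_smul, ← two_mul, mul_inv_cancel₀ h2, one_smul]

lemma thB_add (hβ : BOK p β) (h2 : (2 : ZMod p) ≠ 0) (a b : Vv p) :
    thB β (a + b) = thB β a + thB β b + β (thB β a) (thB β b) := by
  rw [beta_th hβ]
  show (a + b) + (2⁻¹ : ZMod p) • β (a + b) (a + b)
      = (a + (2⁻¹ : ZMod p) • β a a) + (b + (2⁻¹ : ZMod p) • β b b) + β a b
  rw [badd1 hβ, hβ.1, hβ.1, hβ.2.1 b a]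
  rw [smul_add, smul_add, smul_add]
  have hBB := two_smul_inv h2 (β a b)
  conv_rhs => rw [← hBB]
  abel

lemma thB_sub (hβ : BOK p β) (u : Vv p) :
    thB β (u - (2⁻¹ : ZMod p) • β u u) = u := by
  have hb : β (u - (2⁻¹ : ZMod p) • β u u) (u - (2⁻¹ : ZMod p) • β u u) = β u u := by
    simp only [bsub1 hβ, bsub2 hβ, bzsmul1 hβ, bzsmul2 hβ, beta_prod_zero hβ, hβ.2.2,
      smul_zero, sub_zero, zero_sub, neg_zero, sub_neg_eq_add, add_zero]
  show (u - (2⁻¹ : ZMod p) • β u u) + (2⁻¹ : ZMod p) •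
      β (u - (2⁻¹ : ZMod p) • β u u) (u - (2⁻¹ : ZMod p) • β u u) = u
  rw [hb]
  abel

lemma thB_inj_eq (hβ : BOK p β) {u w : Vv p} (h : thB β u = thB β w) : u = w := by
  have h2 : β u u = β w w := by
    have := beta_th hβ u u
    rw [h, beta_th hβ] at this
    exact this.symm
  have : u + (2⁻¹ : ZMod p) • β u u = w + (2⁻¹ : ZMod p) • β w w := h
  rw [h2] at this
  exact add_right_cancel this

/-- The homomorphism `C_p² →* Perm (C_p² × C_2)` with range `Ψ_β`. -/
def bhom (hβ : BOK p β) (h2 : (2 : ZMod p) ≠ 0) :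
    Multiplicative (Vv p) →* Equiv.Perm (Multiplicative (Mm p)) :=
  MonoidHom.mk' (fun a => fperm hβ (thB β (toAdd a)))
    (by
      intro a b
      show fperm hβ (thB β (toAdd (a * b)))
          = fperm hβ (thB β (toAdd a)) * fperm hβ (thB β (toAdd b))
      rw [fperm_mul hβ]
      congr 1
      rw [toAdd_mul, thB_add hβ h2])

lemma mem_bhom_range (hβ : BOK p β) (h2 : (2 : ZMod p) ≠ 0)
    (g : Equiv.Perm (Multiplicative (Mm p))) :
    g ∈ (bhom hβ h2).range ↔ ∃ u, g = fperm hβ u := by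
  constructor
  · rintro ⟨a, rfl⟩
    exact ⟨thB β (toAdd a), rfl⟩
  · rintro ⟨u, rfl⟩
    refine ⟨ofAdd (u - (2⁻¹ : ZMod p) • β u u), ?_⟩
    show fperm hβ (thB β (toAdd (ofAdd (u - (2⁻¹ : ZMod p) • β u u)))) = fperm hβ u
    rw [toAdd_ofAdd, thB_sub hβ]

/-- The automorphism part of `fperm`. -/
def muHom (hβ : BOK p β) (u : Vv p) : Multiplicative (Mm p) →* Multiplicative (Mm p) :=
  MonoidHom.mk' (fun m => ofAdd ((toAdd m).1 + β u (toAdd m).1, (toAdd m).2))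
    (by
      intro a b
      apply Multiplicative.toAdd.injective
      apply Prod.ext
      · show (toAdd (a * b)).1 + β u (toAdd (a * b)).1
            = ((toAdd a).1 + β u (toAdd a).1) + ((toAdd b).1 + β u (toAdd b).1)
        rw [toAdd_mul, Prod.fst_add, hβ.1]
        abel
      · rfl)

lemma muHom_bij (hβ : BOK p β) (u : Vv p) : Function.Bijective (muHom hβ u) := by
  rw [Function.bijective_iff_has_inverse]
  refine ⟨fun m => ofAdd ((toAdd m).1 - β u (toAdd m).1, (toAdd m).2), ?_, ?_⟩
  · intro m
    apply Multiplicative.toAdd.injective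
    apply Prod.ext
    · show ((toAdd m).1 + β u (toAdd m).1) - β u ((toAdd m).1 + β u (toAdd m).1)
          = (toAdd m).1
      rw [hβ.1, hβ.2.2, add_zero]
      abel
    · rfl
  · intro m
    apply Multiplicative.toAdd.injective
    apply Prod.ext
    · show ((toAdd m).1 - β u (toAdd m).1) + β u ((toAdd m).1 - β u (toAdd m).1)
          = (toAdd m).1
      rw [bsub2 hβ, hβ.2.2, sub_zero]
      abel
    · rfl

lemma fperm_mem_hol (hβ : BOK p β) (u : Vv p) :
    fperm hβ u ∈ Hol (Multiplicative (Mm p)) := by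
  apply mem_hol_of_affine (ofAdd ((u : Vv p), (0 : ZMod 2))) (muHom hβ u) (muHom_bij hβ u)
  intro m
  apply Multiplicative.toAdd.injective
  apply Prod.ext
  · show u + (toAdd m).1 + β u (toAdd m).1 = u + ((toAdd m).1 + β u (toAdd m).1)
    abel
  · show (toAdd m).2 = 0 + (toAdd m).2
    rw [zero_add]

lemma bhom_range_le_hol (hβ : BOK p β) (h2 : (2 : ZMod p) ≠ 0) :
    (bhom hβ h2).range ≤ Hol (Multiplicative (Mm p)) := by
  rintro g ⟨a, rfl⟩
  exact fperm_mem_hol hβ _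

lemma bhom_range_semiregular (hβ : BOK p β) (h2 : (2 : ZMod p) ≠ 0) :
    IsSemiregular ((bhom hβ h2).range) := by
  intro g hg hne m hfix
  obtain ⟨u, rfl⟩ := (mem_bhom_range hβ h2 g).1 hg
  set a := (toAdd m).1 with ha
  have h1 : u + a + β u a = a := by
    have := congrArg (fun z => (toAdd z).1) hfix
    simpa [fperm_apply] using this
  have h2' : u + β u a = 0 := by
    have hc : (u + β u a) + a = 0 + a := by
      rw [zero_add]
      calc (u + β u a) + a = u + a + β u a := by abel
        _ = a := h1
    exact add_right_cancel hc
  have hu : u = -β u a := eq_neg_of_add_eq_zero_left h2'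
  have hba : β u a = 0 := by
    conv_lhs => rw [hu]
    rw [bneg1 hβ, beta_prod_zero hβ, neg_zero]
  have hu0 : u = 0 := by rw [hu, hba, neg_zero]
  rw [hu0, fperm_zero hβ] at hne
  exact hne rfl

lemma bhom_injective (hβ : BOK p β) (h2 : (2 : ZMod p) ≠ 0) :
    Function.Injective (bhom hβ h2) := by
  intro a b hab
  have h1 := congrArg (fun g : Equiv.Perm (Multiplicative (Mm p)) => (toAdd (g 1)).1) hab
  have h2' : thB β (toAdd a) = thB β (toAdd b) := by
    simpa [fperm_one hβ, bhom] using h1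
  exact Multiplicative.toAdd.injective (thB_inj_eq hβ h2')

lemma bhom_range_iso (hβ : BOK p β) (h2 : (2 : ZMod p) ≠ 0) :
    Nonempty ((bhom hβ h2).range ≃* Multiplicative (Vv p)) :=
  ⟨(MonoidHom.ofInjective (bhom_injective hβ h2)).symm⟩

end WithBeta

/-- The map from `BB p` to subgroups of the permutation group. -/
def PsiB (h2 : (2 : ZMod p) ≠ 0) (b : BB p) :
    Subgroup (Equiv.Perm (Multiplicative (Mm p))) :=
  (bhom b.2 h2).range

lemma PsiB_injective (h2 : (2 : ZMod p) ≠ 0) :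
    Function.Injective (PsiB (p := p) h2) := by
  intro b b' hbb
  obtain ⟨β, hβ⟩ := b
  obtain ⟨β', hβ'⟩ := b'
  apply Subtype.ext
  show β = β'
  funext u x
  have hmem : fperm hβ u ∈ (bhom hβ' h2).range := by
    have : fperm hβ u ∈ (bhom hβ h2).range := (mem_bhom_range hβ h2 _).2 ⟨u, rfl⟩
    rw [show (bhom hβ h2).range = (bhom hβ' h2).range from hbb] at this
    exact this
  obtain ⟨w, hw⟩ := (mem_bhom_range hβ' h2 _).1 hmem
  have h1 : u = w := by
    have := congrArg (fun g : Equiv.Perm (Multiplicative (Mm p)) => (toAdd (g 1)).1) hw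
    simpa [fperm_one hβ, fperm_one hβ'] using this
  subst h1
  have h2' := congrArg
    (fun g : Equiv.Perm (Multiplicative (Mm p)) => (toAdd (g (ofAdd ((x : Vv p), (0:ZMod 2))))).1) hw
  simp only [fperm_apply, toAdd_ofAdd] at h2'
  exact add_left_cancel h2'

end Construction

section SndLemmas

open Multiplicative

/-- The automorphism part of a permutation (as a raw function). -/
def autf {G : Type*} [CommGroup G] (g : Equiv.Perm G) : G → G := fun x => (g 1)⁻¹ * g x

section GenericPow

variable {G : Type*} [CommGroup G]

lemma autf_apply (g : Equiv.Perm G) (x : G) : autf g x = (g 1)⁻¹ * g x := rfl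

lemma apply_eq_one_mul_autf (g : Equiv.Perm G) (x : G) : g x = g 1 * autf g x :=
  (mul_inv_cancel_left _ _).symm

lemma autf_one (g : Equiv.Perm G) : autf g 1 = 1 := by
  rw [autf_apply, inv_mul_eq_one]

lemma autf_mul {g : Equiv.Perm G} (hg : g ∈ Hol G) (x y : G) :
    autf g (x * y) = autf g x * autf g y :=
  hol_aut_mul hg x y

lemma iter_mul (f : G → G) (hf : ∀ x y, f (x * y) = f x * f y) (k : ℕ) (x y : G) :
    f^[k] (x * y) = f^[k] x * f^[k] y := by
  induction k generalizing x y with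
  | zero => rfl
  | succ k ih => rw [Function.iterate_succ_apply, Function.iterate_succ_apply,
      Function.iterate_succ_apply, hf, ih]

lemma hol_pow_apply {g : Equiv.Perm G} (hg : g ∈ Hol G) (k : ℕ) (x : G) :
    (g ^ k) x = (g ^ k) 1 * (autf g)^[k] x := by
  induction k generalizing x with
  | zero => simp
  | succ k ih =>
    rw [pow_succ, Equiv.Perm.mul_apply, Equiv.Perm.mul_apply, ih (g x), ih (g 1)]
    rw [apply_eq_one_mul_autf g x, iter_mul _ (autf_mul hg)]
    rw [← Function.iterate_succ_apply]
    group

lemma hol_pow_eq_one_aut {g : Equiv.Perm G} (hg : g ∈ Hol G) {n : ℕ} (hgn : g ^ n = 1)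
    (x : G) : (autf g)^[n] x = x := by
  have h := hol_pow_apply hg n x
  rw [hgn] at h
  simpa using h.symm

end GenericPow

variable {p : ℕ} [NeZero p] [Fact p.Prime]

lemma psmul_zmod (a : ZMod p) : p • a = 0 := by
  rw [nsmul_eq_mul, ZMod.natCast_self, zero_mul]

lemma psmul_V (x : Vv p) : p • x = 0 :=
  Prod.ext (by rw [Prod.smul_fst, psmul_zmod]; rfl) (by rw [Prod.smul_snd, psmul_zmod]; rfl)

lemma odd_nsmul_z2 {p : ℕ} (hodd : Odd p) (w : ZMod 2) : p • w = w := by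
  have h1 : (p : ZMod 2) = 1 := by
    rw [← ZMod.natCast_mod p 2, Nat.odd_iff.mp hodd, Nat.cast_one]
  rw [nsmul_eq_mul, h1, one_mul]

lemma vv_two (h2 : (2 : ZMod p) ≠ 0) (a : Vv p) (ha : a + a = 0) : a = 0 := by
  have key : ∀ b : ZMod p, b + b = 0 → b = 0 := by
    intro b hb
    rw [← two_mul] at hb
    rcases mul_eq_zero.mp hb with h | h
    · exact absurd h h2
    · exact h
  have h1 := congrArg Prod.fst ha
  have hsnd := congrArg Prod.snd ha
  exact Prod.ext (key _ h1) (key _ hsnd)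

/-- The unique element of order two. -/
def zel (p : ℕ) : Multiplicative (Mm p) := ofAdd ((0 : Vv p), (1 : ZMod 2))

lemma zel_sq : zel p * zel p = 1 := by
  apply Multiplicative.toAdd.injective
  apply Prod.ext
  · show (0 : Vv p) + 0 = 0
    rw [add_zero]
  · show (1 : ZMod 2) + 1 = 0
    decide

lemma zel_ne_one : zel p ≠ 1 := by
  intro h
  have := congrArg (fun m : Multiplicative (Mm p) => (toAdd m).2) h
  exact one_ne_zero this

lemma exists_sq (h2 : (2 : ZMod p) ≠ 0) (m : Multiplicative (Mm p))
    (hm : (toAdd m).2 = 0) : ∃ y, y * y = m := by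
  refine ⟨ofAdd ((2⁻¹ : ZMod p) • (toAdd m).1, 0), ?_⟩
  apply Multiplicative.toAdd.injective
  apply Prod.ext
  · show (2⁻¹ : ZMod p) • (toAdd m).1 + (2⁻¹ : ZMod p) • (toAdd m).1 = (toAdd m).1
    exact two_smul_inv h2 _
  · show (0 : ZMod 2) + 0 = (toAdd m).2
    rw [hm, add_zero]

lemma hol_snd_zero (h2 : (2 : ZMod p) ≠ 0) {g : Equiv.Perm (Multiplicative (Mm p))}
    (hg : g ∈ Hol (Multiplicative (Mm p))) {m : Multiplicative (Mm p)}
    (hm : (toAdd m).2 = 0) :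
    (toAdd (g m)).2 = (toAdd (g 1)).2 := by
  obtain ⟨y, hy⟩ := exists_sq h2 m hm
  have h := hol_apply_mul hg y y
  rw [hy] at h
  rw [h]
  simp only [toAdd_mul, Prod.snd_add, toAdd_inv, Prod.snd_neg]
  have : ∀ A B : ZMod 2, A + -B + A = B := by decide
  exact this _ _

lemma hol_snd_zel (h2 : (2 : ZMod p) ≠ 0) {g : Equiv.Perm (Multiplicative (Mm p))}
    (hg : g ∈ Hol (Multiplicative (Mm p))) :
    (toAdd (g (zel p))).2 = (toAdd (g 1)).2 + 1 := by
  set q := (g 1)⁻¹ * g (zel p) with hq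
  have hq2 : q * q = 1 := by
    have h := hol_aut_mul hg (zel p) (zel p)
    rw [zel_sq] at h
    rw [hq, ← h, inv_mul_cancel]
  have hq1 : (toAdd q).1 = 0 := by
    apply vv_two h2
    have := congrArg (fun m : Multiplicative (Mm p) => (toAdd m).1) hq2
    simpa using this
  have hqne : q ≠ 1 := by
    intro h
    rw [hq, inv_mul_eq_one] at h
    exact zel_ne_one (g.injective h.symm)
  have hqs : (toAdd q).2 = 1 := by
    rcases (show ∀ w : ZMod 2, w = 0 ∨ w = 1 by decide) ((toAdd q).2) with h | h
    · exfalso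
      apply hqne
      apply Multiplicative.toAdd.injective
      exact Prod.ext hq1 h
    · exact h
  have hqs' : -(toAdd (g 1)).2 + (toAdd (g (zel p))).2 = 1 := by
    have : (toAdd q).2 = -(toAdd (g 1)).2 + (toAdd (g (zel p))).2 := by
      rw [hq]
      simp [toAdd_mul, toAdd_inv]
    rw [← this, hqs]
  have : ∀ A B : ZMod 2, -A + B = 1 → B = A + 1 := by decide
  exact this _ _ hqs'

lemma hol_snd (h2 : (2 : ZMod p) ≠ 0) {g : Equiv.Perm (Multiplicative (Mm p))}
    (hg : g ∈ Hol (Multiplicative (Mm p))) (m : Multiplicative (Mm p)) :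
    (toAdd (g m)).2 = (toAdd (g 1)).2 + (toAdd m).2 := by
  rcases (show ∀ w : ZMod 2, w = 0 ∨ w = 1 by decide) ((toAdd m).2) with h | h
  · rw [h, add_zero]
    exact hol_snd_zero h2 hg h
  · have hm' : m = zel p * ((zel p)⁻¹ * m) := (mul_inv_cancel_left _ _).symm
    have hs' : (toAdd ((zel p)⁻¹ * m)).2 = 0 := by
      rw [toAdd_mul, Prod.snd_add, toAdd_inv, Prod.snd_neg, h]
      show -(1 : ZMod 2) + 1 = 0
      decide
    calc (toAdd (g m)).2 = (toAdd (g (zel p * ((zel p)⁻¹ * m)))).2 := by rw [← hm']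
      _ = (toAdd (g (zel p) * (g 1)⁻¹ * g ((zel p)⁻¹ * m))).2 := by
          rw [hol_apply_mul hg]
      _ = (toAdd (g 1)).2 + (toAdd m).2 := by
          rw [toAdd_mul, Prod.snd_add, toAdd_mul, Prod.snd_add, toAdd_inv, Prod.snd_neg]
          rw [hol_snd_zel h2 hg, hol_snd_zero h2 hg hs', h]
          generalize (toAdd (g 1)).2 = A
          revert A
          decide
end SndLemmas

section HDev

open Multiplicative

variable {p : ℕ} [NeZero p] [Fact p.Prime]

section LinHelpers

lemma add_fun_zero {f : Vv p → Vv p} (hf : ∀ x y, f (x + y) = f x + f y) : f 0 = 0 := by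
  have h := hf 0 0
  rw [add_zero] at h
  exact left_eq_add.mp h

lemma add_fun_nsmul {f : Vv p → Vv p} (hf : ∀ x y, f (x + y) = f x + f y) (n : ℕ) (y : Vv p) :
    f (n • y) = n • f y := by
  induction n with
  | zero => simpa using add_fun_zero hf
  | succ n ih => rw [succ_nsmul, hf, ih, succ_nsmul]

lemma add_fun_zsmul {f : Vv p → Vv p} (hf : ∀ x y, f (x + y) = f x + f y) (c : ZMod p)
    (y : Vv p) : f (c • y) = c • f y := by
  rw [zsmul_val, zsmul_val, add_fun_nsmul hf]

lemma add_lin {f : Vv p → Vv p} (hf : ∀ x y, f (x + y) = f x + f y) (x : Vv p) :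
    f x = x.1 • f (1, 0) + x.2 • f (0, 1) := by
  conv_lhs => rw [decompV x]
  rw [hf, add_fun_zsmul hf, add_fun_zsmul hf]

end LinHelpers

lemma ofAdd_mul0 (x y : Vv p) :
    ofAdd ((x, (0 : ZMod 2)) : Mm p) * ofAdd ((y, (0 : ZMod 2)) : Mm p)
      = ofAdd ((x + y, (0 : ZMod 2)) : Mm p) := by
  apply Multiplicative.toAdd.injective
  exact Prod.ext rfl (add_zero 0)

lemma m_decomp (m : Multiplicative (Mm p)) :
    m = ofAdd (((toAdd m).1, (0 : ZMod 2)) : Mm p) * ofAdd ((0, (toAdd m).2) : Mm p) := by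
  apply Multiplicative.toAdd.injective
  apply Prod.ext
  · exact (add_zero _).symm
  · exact (zero_add _).symm

variable {H : Subgroup (Equiv.Perm (Multiplicative (Mm p)))}

/-- A "good selection" : a regular system of representatives `g! u` for `H`. -/
structure GoodSel (p : ℕ) [NeZero p] [Fact p.Prime]
    (H : Subgroup (Equiv.Perm (Multiplicative (Mm p))))
    (g! : Vv p → Equiv.Perm (Multiplicative (Mm p))) : Prop where
  hodd : Odd p
  h2 : (2 : ZMod p) ≠ 0
  hHol : H ≤ Hol (Multiplicative (Mm p))
  hSemi : IsSemiregular H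
  mem : ∀ u, g! u ∈ H
  one : ∀ u, g! u 1 = ofAdd ((u, (0 : ZMod 2)) : Mm p)
  uniq : ∀ g ∈ H, g = g! ((toAdd (g 1)).1)
  powp : ∀ g ∈ H, g ^ p = 1
  comm : ∀ g ∈ H, ∀ h ∈ H, g * h = h * g

/-- The multiplication associated with the regular subgroup `H`. -/
def DDf (g! : Vv p → Equiv.Perm (Multiplicative (Mm p))) : Vv p → Vv p → Vv p :=
  fun u x => (toAdd (autf (g! u) (ofAdd ((x, (0 : ZMod 2)) : Mm p)))).1 - x

variable {g! : Vv p → Equiv.Perm (Multiplicative (Mm p))}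

lemma gs_mem_hol (hh : GoodSel p H g!) (u : Vv p) : g! u ∈ Hol (Multiplicative (Mm p)) :=
  hh.hHol (hh.mem u)

lemma dd_snd (hh : GoodSel p H g!) (u : Vv p) (m : Multiplicative (Mm p)) :
    (toAdd (autf (g! u) m)).2 = (toAdd m).2 := by
  rw [autf_apply, toAdd_mul, Prod.snd_add, toAdd_inv, Prod.snd_neg,
    hol_snd hh.h2 (gs_mem_hol hh u) m]
  exact neg_add_cancel_left _ _

lemma aut_apply' (hh : GoodSel p H g!) (u x : Vv p) :
    autf (g! u) (ofAdd ((x, (0 : ZMod 2)) : Mm p))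
      = ofAdd ((x + DDf g! u x, (0 : ZMod 2)) : Mm p) := by
  apply Multiplicative.toAdd.injective
  apply Prod.ext
  · show (toAdd (autf (g! u) (ofAdd ((x, (0 : ZMod 2)) : Mm p)))).1 = x + DDf g! u x
    rw [DDf]
    abel
  · rw [dd_snd hh]
    rfl

lemma g_eval (hh : GoodSel p H g!) (u x : Vv p) :
    g! u (ofAdd ((x, (0 : ZMod 2)) : Mm p))
      = ofAdd ((u + x + DDf g! u x, (0 : ZMod 2)) : Mm p) := by
  rw [apply_eq_one_mul_autf (g! u), hh.one u, aut_apply' hh, ofAdd_mul0]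
  apply Multiplicative.toAdd.injective
  apply Prod.ext
  · show u + (x + DDf g! u x) = u + x + DDf g! u x
    rw [add_assoc]
  · rfl

lemma dd_add2 (hh : GoodSel p H g!) (u x y : Vv p) :
    DDf g! u (x + y) = DDf g! u x + DDf g! u y := by
  have h := autf_mul (gs_mem_hol hh u) (ofAdd ((x, (0 : ZMod 2)) : Mm p))
    (ofAdd ((y, (0 : ZMod 2)) : Mm p))
  rw [ofAdd_mul0, aut_apply' hh, aut_apply' hh, aut_apply' hh, ofAdd_mul0] at h
  have h1 := congrArg (fun m : Multiplicative (Mm p) => (toAdd m).1) h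
  simp only [toAdd_ofAdd] at h1
  -- h1 : x + y + DD u (x+y) = x + DD u x + (y + DD u y)
  have h2 : (x + y) + DDf g! u (x + y) = (x + y) + (DDf g! u x + DDf g! u y) := by
    rw [h1]
    abel
  exact add_left_cancel h2

lemma dd_zero2 (hh : GoodSel p H g!) (u : Vv p) : DDf g! u 0 = 0 :=
  add_fun_zero (dd_add2 hh u)

lemma dd_zsmul (hh : GoodSel p H g!) (u : Vv p) (c : ZMod p) (y : Vv p) :
    DDf g! u (c • y) = c • DDf g! u y :=
  add_fun_zsmul (dd_add2 hh u) c y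

lemma prod_eval (hh : GoodSel p H g!) (u w : Vv p) :
    (g! u * g! w) 1 = ofAdd ((u + w + DDf g! u w, (0 : ZMod 2)) : Mm p) := by
  rw [Equiv.Perm.mul_apply, hh.one w, g_eval hh]

lemma prod_sel (hh : GoodSel p H g!) (u w : Vv p) :
    g! u * g! w = g! (u + w + DDf g! u w) := by
  have hmem : g! u * g! w ∈ H := mul_mem (hh.mem u) (hh.mem w)
  have h := hh.uniq _ hmem
  rw [prod_eval hh, toAdd_ofAdd] at h
  exact h

lemma dd_symm (hh : GoodSel p H g!) (u w : Vv p) : DDf g! u w = DDf g! w u := by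
  have h := congrArg (fun g : Equiv.Perm (Multiplicative (Mm p)) => g 1)
    (hh.comm _ (hh.mem u) _ (hh.mem w))
  simp only [prod_eval hh] at h
  have h1 := congrArg (fun m : Multiplicative (Mm p) => (toAdd m).1) h
  simp only [toAdd_ofAdd] at h1
  -- h1 : u + w + DD u w = w + u + DD w u
  have h2 : (u + w) + DDf g! u w = (u + w) + DDf g! w u := by
    rw [h1]
    abel
  exact add_left_cancel h2

lemma dd_prod (hh : GoodSel p H g!) (u w y : Vv p) :
    DDf g! (u + w + DDf g! u w) y
      = DDf g! u y + DDf g! w y + DDf g! u (DDf g! w y) := by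
  set s := u + w + DDf g! u w with hs
  have h : g! s (ofAdd ((y, (0 : ZMod 2)) : Mm p))
      = g! u (g! w (ofAdd ((y, (0 : ZMod 2)) : Mm p))) := by
    rw [← Equiv.Perm.mul_apply, prod_sel hh]
  rw [g_eval hh, g_eval hh, g_eval hh] at h
  have h1 := congrArg (fun m : Multiplicative (Mm p) => (toAdd m).1) h
  simp only [toAdd_ofAdd] at h1
  -- h1 : s + y + DD s y = u + (w + y + DD w y) + DD u (w + y + DD w y)
  rw [dd_add2 hh, dd_add2 hh] at h1
  have h2 : (s + y) + DDf g! s y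
      = (s + y) + (DDf g! u y + DDf g! w y + DDf g! u (DDf g! w y)) := by
    rw [h1, hs]
    abel
  exact add_left_cancel h2

lemma dd_comm2 (hh : GoodSel p H g!) (u w y : Vv p) :
    DDf g! u (DDf g! w y) = DDf g! w (DDf g! u y) := by
  have h1 := dd_prod hh u w y
  have h2 := dd_prod hh w u y
  rw [show w + u + DDf g! w u = u + w + DDf g! u w by rw [dd_symm hh w u]; abel] at h2
  rw [h2] at h1
  -- h1 : DDw y + DDu y + DDw (DDu y) = DDu y + DDw y + DDu (DDw y)
  have h3 : (DDf g! u y + DDf g! w y) + DDf g! w (DDf g! u y)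
      = (DDf g! u y + DDf g! w y) + DDf g! u (DDf g! w y) := by
    rw [← h1]
    abel
  exact (add_left_cancel h3).symm

/-- The `1 + D_u` endomorphism of `V`. -/
def TTf (hh : GoodSel p H g!) (u : Vv p) : AddMonoid.End (Vv p) :=
  AddMonoidHom.mk' (fun x => x + DDf g! u x)
    (by
      intro x y
      show x + y + DDf g! u (x + y) = (x + DDf g! u x) + (y + DDf g! u y)
      rw [dd_add2 hh]
      abel)

lemma TTf_apply (hh : GoodSel p H g!) (u x : Vv p) : TTf hh u x = x + DDf g! u x := rfl

lemma TTf_sub_one_apply (hh : GoodSel p H g!) (u x : Vv p) :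
    (TTf hh u - 1 : AddMonoid.End (Vv p)) x = DDf g! u x := by
  show TTf hh u x - (1 : AddMonoid.End (Vv p)) x = DDf g! u x
  rw [TTf_apply, AddMonoid.End.one_apply]
  abel

lemma aut_iter (hh : GoodSel p H g!) (u : Vv p) (k : ℕ) (x : Vv p) :
    (autf (g! u))^[k] (ofAdd ((x, (0 : ZMod 2)) : Mm p))
      = ofAdd (((TTf hh u ^ k) x, (0 : ZMod 2)) : Mm p) := by
  induction k with
  | zero => simp
  | succ k ih =>
    have hT : (TTf hh u ^ (k + 1)) x = (TTf hh u ^ k) x + DDf g! u ((TTf hh u ^ k) x) := by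
      rw [pow_succ']
      rfl
    rw [Function.iterate_succ_apply', ih, aut_apply' hh, hT]

lemma TT_pow_p (hh : GoodSel p H g!) (u : Vv p) : TTf hh u ^ p = 1 := by
  apply AddMonoidHom.ext
  intro x
  have h := hol_pow_eq_one_aut (gs_mem_hol hh u) (hh.powp _ (hh.mem u))
    (ofAdd ((x, (0 : ZMod 2)) : Mm p))
  rw [aut_iter hh] at h
  have h1 := congrArg (fun m : Multiplicative (Mm p) => (toAdd m).1) h
  simp only [toAdd_ofAdd] at h1
  exact h1

lemma DD_pow_p (hh : GoodSel p H g!) (u : Vv p) :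
    (TTf hh u - 1 : AddMonoid.End (Vv p)) ^ p = 0 := by
  have hc : Commute (TTf hh u) (-1 : AddMonoid.End (Vv p)) := Commute.neg_one_right (TTf hh u)
  have hb := hc.add_pow p
  rw [show TTf hh u + (-1 : AddMonoid.End (Vv p)) = TTf hh u - 1 from (sub_eq_add_neg _ _).symm]
    at hb
  rw [hb, Finset.sum_range_succ]
  have hmid : ∀ m, m ∈ Finset.range p → m ≠ 0 →
      TTf hh u ^ m * (-1 : AddMonoid.End (Vv p)) ^ (p - m)
        * ((p.choose m : ℕ) : AddMonoid.End (Vv p)) = 0 := by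
    intro m hm hm0
    obtain ⟨t, ht⟩ := (Fact.out : p.Prime).dvd_choose_self hm0 (Finset.mem_range.mp hm)
    have hpz : ((p : ℕ) : AddMonoid.End (Vv p)) = 0 := by
      apply AddMonoid.End.ext
      intro y
      rw [AddMonoid.End.natCast_apply]
      exact psmul_V y
    rw [ht, Nat.cast_mul, hpz, zero_mul, mul_zero]
  obtain ⟨q, hpq⟩ : ∃ q, p = q + 1 :=
    ⟨p - 1, (Nat.succ_pred_eq_of_pos (Fact.out : p.Prime).pos).symm⟩
  rw [show Finset.range p = Finset.range (q + 1) from by rw [hpq], Finset.sum_range_succ']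
  rw [Finset.sum_eq_zero (fun i hi => hmid (i + 1)
    (by rw [Finset.mem_range] at hi ⊢; omega) (Nat.succ_ne_zero i))]
  rw [TT_pow_p hh]
  simp only [pow_zero, one_mul, Nat.sub_self, Nat.choose_self, Nat.cast_one, mul_one,
    Nat.choose_zero_right, Nat.sub_zero, zero_add]
  have hneg : ∀ y : Vv p, (-1 : AddMonoid.End (Vv p)) y = -y := by
    intro y
    rfl
  have hsq1 : (-1 : AddMonoid.End (Vv p)) ^ 2 = 1 := by
    rw [sq]
    apply AddMonoidHom.ext
    intro y
    show (-1 : AddMonoid.End (Vv p)) ((-1 : AddMonoid.End (Vv p)) y) = y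
    rw [hneg, hneg, neg_neg]
  have h5 : (-1 : AddMonoid.End (Vv p)) ^ p = -1 := by
    obtain ⟨k, hk⟩ := hh.hodd
    calc (-1 : AddMonoid.End (Vv p)) ^ p = (-1) ^ (2 * k + 1) :=
          congrArg (fun n => (-1 : AddMonoid.End (Vv p)) ^ n) hk
      _ = ((-1) ^ 2) ^ k * (-1) ^ 1 := by rw [← pow_mul, ← pow_add]
      _ = -1 := by rw [hsq1, one_pow, pow_one, one_mul]
  rw [h5]
  abel

lemma gs_ne_one (hh : GoodSel p H g!) {u : Vv p} (hu : u ≠ 0) : g! u ≠ 1 := by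
  intro h
  apply hu
  have h1 := hh.one u
  rw [h] at h1
  have h2 := congrArg (fun m : Multiplicative (Mm p) => (toAdd m).1) h1
  simpa using h2.symm

lemma dd_sq_zero (hh : GoodSel p H g!) (u x : Vv p) : DDf g! u (DDf g! u x) = 0 := by
  by_cases hu : u = 0
  · subst hu
    have hg1 : g! 0 = 1 := by
      have := hh.uniq 1 (one_mem H)
      simpa using this.symm
    have hdd0 : ∀ y, DDf g! 0 y = 0 := by
      intro y
      show (toAdd (autf (g! 0) (ofAdd ((y, (0 : ZMod 2)) : Mm p)))).1 - y = 0
      rw [hg1, autf_apply]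
      simp
    rw [hdd0]
  · set a := (DDf g! u (1, 0)).1 with ha
    set c := (DDf g! u (1, 0)).2 with hc
    set b := (DDf g! u (0, 1)).1 with hb
    set d := (DDf g! u (0, 1)).2 with hd
    have hlin : ∀ y : Vv p, DDf g! u y = (a * y.1 + b * y.2, c * y.1 + d * y.2) := by
      intro y
      rw [add_lin (dd_add2 hh u) y]
      apply Prod.ext
      · simp only [Prod.fst_add, Prod.smul_fst, smul_eq_mul, ← ha, ← hb]
        ring
      · simp only [Prod.snd_add, Prod.smul_snd, smul_eq_mul, ← hc, ← hd]
        ring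
    have hdet : a * d - b * c = 0 := by
      by_contra hdet
      set y : Vv p := ((d * (-u.1) - b * (-u.2)) / (a * d - b * c),
        (a * (-u.2) - c * (-u.1)) / (a * d - b * c)) with hy
      have hDy : DDf g! u y = -u := by
        rw [hlin]
        apply Prod.ext
        · show a * ((d * (-u.1) - b * (-u.2)) / (a * d - b * c))
              + b * ((a * (-u.2) - c * (-u.1)) / (a * d - b * c)) = (-u).1
          rw [Prod.fst_neg]
          field_simp
          ring
        · show c * ((d * (-u.1) - b * (-u.2)) / (a * d - b * c))
              + d * ((a * (-u.2) - c * (-u.1)) / (a * d - b * c)) = (-u).2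
          rw [Prod.snd_neg, div_eq_mul_inv, div_eq_mul_inv]
          have hI := mul_inv_cancel₀ hdet
          linear_combination (-u.2) * hI
      have hfix : g! u (ofAdd ((y, (0 : ZMod 2)) : Mm p)) = ofAdd ((y, (0 : ZMod 2)) : Mm p) := by
        rw [g_eval hh, hDy]
        congr 1
        apply Prod.ext
        · show u + y + -u = y
          abel
        · rfl
      exact hh.hSemi _ (hh.mem u) (gs_ne_one hh hu) _ hfix
    have hCH : ∀ y, DDf g! u (DDf g! u y) = (a + d) • DDf g! u y := by
      intro y
      rw [hlin y, hlin]
      apply Prod.ext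
      · show a * (a * y.1 + b * y.2) + b * (c * y.1 + d * y.2)
            = ((a + d) • ((a * y.1 + b * y.2, c * y.1 + d * y.2) : Vv p)).1
        rw [Prod.smul_fst, smul_eq_mul]
        linear_combination (-y.1) * hdet
      · show c * (a * y.1 + b * y.2) + d * (c * y.1 + d * y.2)
            = ((a + d) • ((a * y.1 + b * y.2, c * y.1 + d * y.2) : Vv p)).2
        rw [Prod.smul_snd, smul_eq_mul]
        linear_combination (-y.2) * hdet
    by_cases hD : ∀ y, DDf g! u y = 0
    · exact hD _
    · push_neg at hD
      obtain ⟨y0, hy0⟩ := hD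
      obtain ⟨q, hpq⟩ : ∃ q, p = q + 1 :=
        ⟨p - 1, (Nat.succ_pred_eq_of_pos (Fact.out : p.Prime).pos).symm⟩
      have hiter : ∀ (k : ℕ) (y : Vv p),
          ((TTf hh u - 1 : AddMonoid.End (Vv p)) ^ (k + 1)) y = (a + d) ^ k • DDf g! u y := by
        intro k
        induction k with
        | zero => intro y; rw [pow_one, TTf_sub_one_apply hh, pow_zero, one_smul]
        | succ k ih =>
          intro y
          rw [pow_succ, AddMonoid.End.coe_mul, Function.comp_apply, TTf_sub_one_apply hh, ih,
            hCH, smul_smul, ← pow_succ]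
      have h0 : ((TTf hh u - 1 : AddMonoid.End (Vv p)) ^ p) y0 = 0 := by
        rw [DD_pow_p hh]
        rfl
      rw [show (TTf hh u - 1 : AddMonoid.End (Vv p)) ^ p = (TTf hh u - 1) ^ (q + 1) from
        by rw [← hpq], hiter q y0] at h0
      have hq0 : q ≠ 0 := by
        have := (Fact.out : p.Prime).two_le
        omega
      have htr : a + d = 0 := by
        rcases smul_eq_zero.mp h0 with h | h
        · exact (pow_eq_zero_iff hq0).mp h
        · exact absurd h hy0
      rw [hCH, htr, zero_smul]

lemma dd_triple (hh : GoodSel p H g!) (u w x : Vv p) : DDf g! u (DDf g! w x) = 0 := by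
  set s := u + w + DDf g! u w with hs
  have hsq := dd_sq_zero hh s x
  have hsx := dd_prod hh u w x
  -- DD s x = DDu x + DDw x + DDu (DDw x)
  have hy : DDf g! s (DDf g! s x) = 0 := hsq
  rw [hsx] at hy
  rw [dd_prod hh u w (DDf g! u x + DDf g! w x + DDf g! u (DDf g! w x))] at hy
  -- expand the three pieces
  have e1 : DDf g! u (DDf g! u x + DDf g! w x + DDf g! u (DDf g! w x))
      = DDf g! u (DDf g! w x) := by
    rw [dd_add2 hh, dd_add2 hh, dd_sq_zero hh u x, dd_sq_zero hh u (DDf g! w x),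
      zero_add, add_zero]
  have e2 : DDf g! w (DDf g! u x + DDf g! w x + DDf g! u (DDf g! w x))
      = DDf g! u (DDf g! w x) := by
    rw [dd_add2 hh, dd_add2 hh]
    rw [dd_comm2 hh w u x]
    rw [dd_sq_zero hh w x]
    rw [dd_comm2 hh w u (DDf g! w x)]
    rw [dd_sq_zero hh w x, dd_zero2 hh u, add_zero, add_zero]
  rw [e1, e2, dd_sq_zero hh u (DDf g! w x), add_zero] at hy
  exact vv_two hh.h2 _ hy

lemma aut_w (hh : GoodSel p H g!) (u : Vv p) (w : ZMod 2) :
    autf (g! u) (ofAdd (((0 : Vv p), w) : Mm p)) = ofAdd (((0 : Vv p), w) : Mm p) := by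
  rcases (show ∀ w : ZMod 2, w = 0 ∨ w = 1 by decide) w with h | h
  · subst h
    have h1 : (ofAdd (((0 : Vv p), (0 : ZMod 2)) : Mm p)) = 1 := rfl
    rw [h1, autf_one]
  · subst h
    have hq2 : autf (g! u) (zel p) * autf (g! u) (zel p) = 1 := by
      rw [← autf_mul (gs_mem_hol hh u), zel_sq, autf_one]
    have hq1 : (toAdd (autf (g! u) (zel p))).1 = 0 := by
      apply vv_two hh.h2
      have := congrArg (fun m : Multiplicative (Mm p) => (toAdd m).1) hq2
      simpa using this
    have hqs : (toAdd (autf (g! u) (zel p))).2 = 1 := by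
      rw [dd_snd hh]
      rfl
    show autf (g! u) (zel p) = ofAdd (((0 : Vv p), (1 : ZMod 2)) : Mm p)
    apply Multiplicative.toAdd.injective
    exact Prod.ext hq1 hqs

/-- The associated multiplication satisfies the axioms. -/
lemma dd_bok (hh : GoodSel p H g!) : BOK p (DDf g!) :=
  ⟨dd_add2 hh, dd_symm hh, dd_triple hh⟩

lemma fperm_eq (hh : GoodSel p H g!) (u : Vv p) :
    fperm (dd_bok hh) u = g! u := by
  refine Equiv.ext fun m => ?_
  conv_rhs => rw [m_decomp m, apply_eq_one_mul_autf (g! u)]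
  rw [hh.one u, autf_mul (gs_mem_hol hh u), aut_apply' hh, aut_w hh, fperm_apply]
  apply Multiplicative.toAdd.injective
  apply Prod.ext
  · show u + (toAdd m).1 + DDf g! u (toAdd m).1
        = u + (((toAdd m).1 + DDf g! u (toAdd m).1) + 0)
    abel
  · show (toAdd m).2 = 0 + (0 + (toAdd m).2)
    rw [zero_add, zero_add]

/-- Every admissible subgroup is of the form `Ψ_β`. -/
lemma exists_bb (hh : GoodSel p H g!) : ∃ b : BB p, PsiB hh.h2 b = H := by
  refine ⟨⟨DDf g!, dd_bok hh⟩, ?_⟩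
  ext g
  rw [PsiB, mem_bhom_range]
  constructor
  · rintro ⟨u, rfl⟩
    rw [fperm_eq hh]
    exact hh.mem u
  · intro hg
    refine ⟨(toAdd (g 1)).1, ?_⟩
    rw [fperm_eq hh]
    exact hh.uniq g hg

end HDev


section Final

open Multiplicative

variable {p : ℕ} [NeZero p] [Fact p.Prime]
variable {H : Subgroup (Equiv.Perm (Multiplicative (Mm p)))}

lemma two_ne_zero_zmod (hodd : Odd p) : (2 : ZMod p) ≠ 0 := by
  intro h
  have h2 : ((2 : ℕ) : ZMod p) = 0 := by exact_mod_cast h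
  have hdvd := (ZMod.natCast_eq_zero_iff 2 p).mp h2
  have hp2 : p = 2 := (Nat.prime_dvd_prime_iff_eq (Fact.out : p.Prime) Nat.prime_two).mp hdvd
  rw [hp2] at hodd
  have := Nat.odd_iff.mp hodd
  omega

lemma build_goodsel (hodd : Odd p)
    (hHol : H ≤ Hol (Multiplicative (Mm p))) (hSemi : IsSemiregular H)
    (iso : H ≃* Multiplicative (Vv p)) :
    ∃ g! : Vv p → Equiv.Perm (Multiplicative (Mm p)), GoodSel p H g! := by
  have h2 : (2 : ZMod p) ≠ 0 := two_ne_zero_zmod hodd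
  have hpow : ∀ g ∈ H, g ^ p = 1 := by
    intro g hg
    have hx : iso ⟨g, hg⟩ ^ p = 1 := by
      apply Multiplicative.toAdd.injective
      rw [toAdd_pow]
      exact psmul_V _
    have h1 : (⟨g, hg⟩ : H) ^ p = 1 := by
      apply iso.injective
      rw [map_pow, hx, map_one]
    have := congrArg (Subtype.val) h1
    simpa using this
  have hcomm : ∀ g ∈ H, ∀ h ∈ H, g * h = h * g := by
    intro g hg h hh
    have h1 : (⟨g, hg⟩ : H) * ⟨h, hh⟩ = ⟨h, hh⟩ * ⟨g, hg⟩ := by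
      apply iso.injective
      rw [map_mul, map_mul, mul_comm]
    have := congrArg (Subtype.val) h1
    simpa using this
  have hsnd0 : ∀ g ∈ H, (toAdd (g 1)).2 = 0 := by
    intro g hg
    have hiter : ∀ k : ℕ, (toAdd ((g ^ k) 1)).2 = k • (toAdd (g 1)).2 := by
      intro k
      induction k with
      | zero => simp
      | succ k ih =>
        rw [pow_succ, Equiv.Perm.mul_apply, hol_snd h2 (hHol (pow_mem hg k)) (g 1), ih,
          succ_nsmul]
    have h1 := hiter p
    rw [hpow g hg, odd_nsmul_z2 hodd] at h1
    simpa using h1.symm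
  have hinj : Function.Injective
      (fun g : ↥H => (toAdd ((g : Equiv.Perm (Multiplicative (Mm p))) 1)).1) := by
    intro g h hgh
    have h1 : (g : Equiv.Perm (Multiplicative (Mm p))) 1
        = (h : Equiv.Perm (Multiplicative (Mm p))) 1 := by
      apply Multiplicative.toAdd.injective
      exact Prod.ext hgh (by rw [hsnd0 _ g.2, hsnd0 _ h.2])
    have hmem : ((h : Equiv.Perm (Multiplicative (Mm p)))⁻¹
        * (g : Equiv.Perm (Multiplicative (Mm p)))) ∈ H := mul_mem (inv_mem h.2) g.2
    have hfix : ((h : Equiv.Perm (Multiplicative (Mm p)))⁻¹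
        * (g : Equiv.Perm (Multiplicative (Mm p)))) 1 = 1 := by
      rw [Equiv.Perm.mul_apply, h1]; exact (Equiv.symm_apply_apply _ _)
    have hone : ((h : Equiv.Perm (Multiplicative (Mm p)))⁻¹
        * (g : Equiv.Perm (Multiplicative (Mm p)))) = 1 := by
      by_contra hne
      exact hSemi _ hmem hne 1 hfix
    have h3 : (h : Equiv.Perm (Multiplicative (Mm p)))
        = (g : Equiv.Perm (Multiplicative (Mm p))) := by
      rwa [inv_mul_eq_one] at hone
    exact Subtype.ext h3.symm
  have hcard : Nat.card ↥H = Nat.card (Vv p) := by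
    rw [Nat.card_congr iso.toEquiv]
    exact Nat.card_congr Multiplicative.toAdd
  have hbij := (Nat.bijective_iff_injective_and_card _).mpr ⟨hinj, hcard⟩
  set E := Equiv.ofBijective _ hbij with hE
  refine ⟨fun u => ↑(E.symm u), hodd, h2, hHol, hSemi, fun u => (E.symm u).2, ?_, ?_, hpow,
    hcomm⟩
  · intro u
    apply Multiplicative.toAdd.injective
    apply Prod.ext
    · exact E.apply_symm_apply u
    · exact hsnd0 _ (E.symm u).2
  · intro g hg
    have h1 : E.symm (E ⟨g, hg⟩) = ⟨g, hg⟩ := E.symm_apply_apply _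
    have := congrArg Subtype.val h1
    exact this.symm

lemma count_Mm (hodd : Odd p) :
    Nat.card {K : Subgroup (Equiv.Perm (Multiplicative (Mm p))) //
      K ≤ Hol (Multiplicative (Mm p)) ∧ IsSemiregular K ∧
        Nonempty (K ≃* Multiplicative (Vv p))} = p ^ 2 := by
  have h2 : (2 : ZMod p) ≠ 0 := two_ne_zero_zmod hodd
  have hbij : Function.Bijective (fun b : BB p =>
      (⟨PsiB h2 b, bhom_range_le_hol b.2 h2, bhom_range_semiregular b.2 h2,
        bhom_range_iso b.2 h2⟩ :
        {K : Subgroup (Equiv.Perm (Multiplicative (Mm p))) //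
          K ≤ Hol (Multiplicative (Mm p)) ∧ IsSemiregular K ∧
            Nonempty (K ≃* Multiplicative (Vv p))})) := by
    constructor
    · intro b b' hb
      exact PsiB_injective h2 (congrArg Subtype.val hb)
    · rintro ⟨K, hKhol, hKsemi, ⟨isoK⟩⟩
      obtain ⟨gs, hh⟩ := build_goodsel hodd hKhol hKsemi isoK
      obtain ⟨b, hb⟩ := exists_bb hh
      exact ⟨b, Subtype.ext hb⟩
  rw [← Nat.card_congr (Equiv.ofBijective _ hbij), card_BB]

end Final

/-- `Hol(C_p × C_{2p})` has exactly `p²` semiregular subgroups isomorphic to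
`C_p × C_p`. -/
theorem statement5 (p : ℕ) (hp : p.Prime) (hodd : Odd p) :
    Nat.card {H : Subgroup (Equiv.Perm (Multiplicative (ZMod p × ZMod (2 * p)))) //
        H ≤ Hol (Multiplicative (ZMod p × ZMod (2 * p))) ∧ IsSemiregular H ∧ Nonempty (H ≃* Vp p)} = p ^ 2 := by
  haveI : Fact p.Prime := ⟨hp⟩
  haveI : NeZero p := ⟨hp.ne_zero⟩
  have hco : Nat.Coprime 2 p := Nat.coprime_two_left.mpr hodd
  let E : (ZMod p × ZMod (2 * p)) ≃+ Mm p :=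
    (AddEquiv.prodCongr (AddEquiv.refl (ZMod p)) (ZMod.chineseRemainder hco).toAddEquiv).trans
      ((AddEquiv.prodCongr (AddEquiv.refl (ZMod p)) AddEquiv.prodComm).trans
        (AddEquiv.prodAssoc (M := ZMod p) (N := ZMod p) (P := ZMod 2)).symm)
  rw [transport_card (Vp p) (AddEquiv.toMultiplicative E)]
  exact count_Mm hodd
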